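/- Let R be a non-zero commutative ring and let (A,G) ∈ GpRg(R). If (A,G) is a maximal element of the partially ordered set GpRg(R), then A is stark. Conversely, if R is a connected order and A is stark, then (A,G) is a maximal element of GpRg(R). -/

import Mathlib

/-- The natural ring homomorphism `A[G] → R` for a subring `A ⊆ R` and a subgroup `G ⊆ Rˣ`. -/
noncomputable def gpRgHom {R : Type*} [CommRing R] (A : Subring R) (G : Subgroup Rˣ) :
    MonoidAlgebra A G →+* R :=
  MonoidAlgebra.liftNCRingHom A.subtype ((Units.coeHom R).comp G.subtype)
    (fun _ _ => Commute.all _ _)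

/-- `A[G] = R`: the natural map `A[G] → R` is a ring isomorphism. -/
def IsGpRg {R : Type*} [CommRing R] (A : Subring R) (G : Subgroup Rˣ) : Prop :=
  Function.Bijective (gpRgHom A G)

/-- A commutative ring is connected if it is non-zero and `0`, `1` are its only idempotents. -/
def IsConnectedRing (R : Type*) [CommRing R] : Prop :=
  Nontrivial R ∧ ∀ e : R, IsIdempotentElem e → e = 0 ∨ e = 1

/-- A commutative ring is stark if it is not isomorphic to any group ring `A[G]`
with `A` a ring and `G` a non-trivial group. -/
def IsStark (R : Type u) [CommRing R] : Prop :=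
  ∀ (A : Type u) (_ : Ring A) (G : Type u) (_ : Group G),
    Nontrivial G → IsEmpty (R ≃+* MonoidAlgebra A G)


open Function

variable {R : Type*} [CommRing R]

theorem gpRgHom_single (B : Subring R) (H : Subgroup Rˣ) (h : H) (b : B) :
    gpRgHom B H (MonoidAlgebra.single h b) = (b : R) * ((h : Rˣ) : R) :=
  MonoidAlgebra.liftNC_single _ _ _ _

noncomputable def gpRgLin (B : Subring R) (H : Subgroup Rˣ) :
    (H →₀ B) →ₗ[B] R :=
  Finsupp.linearCombination B (fun h : H => ((h : Rˣ) : R))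

theorem gpRgHom_eq_lin (B : Subring R) (H : Subgroup Rˣ) (x : MonoidAlgebra B H) :
    gpRgHom B H x = gpRgLin B H x.coeff := by
  induction x using MonoidAlgebra.induction_linear with
  | zero => simp [gpRgLin]
  | add f g hf hg => rw [map_add, MonoidAlgebra.coeff_add, map_add, hf, hg]
  | single h b => rw [gpRgHom_single, gpRgLin, MonoidAlgebra.coeff_single, Finsupp.linearCombination_single]; rfl

theorem isGpRg_iff_lin (B : Subring R) (H : Subgroup Rˣ) :
    IsGpRg B H ↔ Function.Bijective (gpRgLin B H) := by
  have : ⇑(gpRgHom B H) = ⇑(gpRgLin B H) ∘ MonoidAlgebra.coeffEquiv := funext (gpRgHom_eq_lin B H)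
  unfold IsGpRg
  rw [this, Equiv.bijective_comp]

/-- The basis of `R` over `B` given by the elements of `H`. -/
noncomputable def IsGpRg.basis {B : Subring R} {H : Subgroup Rˣ} (hBH : IsGpRg B H) :
    Module.Basis H B R :=
  Module.Basis.ofRepr (LinearEquiv.ofBijective (gpRgLin B H) ((isGpRg_iff_lin B H).mp hBH)).symm

theorem IsGpRg.basis_apply {B : Subring R} {H : Subgroup Rˣ} (hBH : IsGpRg B H) (h : H) :
    hBH.basis h = ((h : Rˣ) : R) := by
  have : gpRgLin B H (Finsupp.single h 1) = ((h : Rˣ) : R) := by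
    simp [gpRgLin]
  calc hBH.basis h = (LinearEquiv.ofBijective (gpRgLin B H) _).symm.symm (Finsupp.single h 1) :=
        rfl
    _ = gpRgLin B H (Finsupp.single h 1) := by rw [LinearEquiv.symm_symm]; rfl
    _ = _ := this

theorem isGpRg_of_basis {B : Subring R} {H : Subgroup Rˣ} (b : Module.Basis H B R)
    (hb : ∀ h : H, b h = ((h : Rˣ) : R)) : IsGpRg B H := by
  rw [isGpRg_iff_lin]
  have : gpRgLin B H = Finsupp.linearCombination B ⇑b := by
    unfold gpRgLin; congr 1; ext h; rw [hb]
  rw [this]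
  have : ⇑(Finsupp.linearCombination B ⇑b) = ⇑(b.repr.symm : (H →₀ B) ≃ₗ[B] R) := by
    ext v; rw [Module.Basis.repr_symm_apply]
  rw [this]
  exact (b.repr.symm : (H →₀ B) ≃ₗ[B] R).bijective
theorem IsGpRg.eq_one_of_val_mem [Nontrivial R] {A : Subring R} {G : Subgroup Rˣ}
    (hAG : IsGpRg A G) {g : G} (hg : ((g : Rˣ) : R) ∈ A) : g = 1 := by
  have h1 : gpRgHom A G (MonoidAlgebra.single g 1) = ((g : Rˣ) : R) := by
    rw [gpRgHom_single]; simp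
  have h2 : gpRgHom A G (MonoidAlgebra.single (1 : G) (⟨_, hg⟩ : A)) = ((g : Rˣ) : R) := by
    rw [gpRgHom_single]; simp
  have := hAG.1 (h1.trans h2.symm)
  rcases MonoidAlgebra.single_inj.mp this with ⟨hg1, -⟩ | ⟨h10, -⟩
  · exact hg1
  · exact absurd h10 one_ne_zero
section Rank

variable {R : Type*} [CommRing R] [Nontrivial R]

/-- Transfer of the ℤ-module structure from the submodule to the subring. -/
noncomputable def subringLinEquiv (B : Subring R) :
    ↥(AddSubgroup.toIntSubmodule B.toAddSubgroup) ≃ₗ[ℤ] B :=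
  AddEquiv.toIntLinearEquiv
    { toFun := fun x => ⟨x.1, x.2⟩
      invFun := fun x => ⟨x.1, x.2⟩
      left_inv := fun _ => rfl
      right_inv := fun _ => rfl
      map_add' := fun _ _ => rfl }

theorem subring_finite (B : Subring R) [Module.Finite ℤ R] : Module.Finite ℤ B :=
  Module.Finite.equiv (subringLinEquiv B)

theorem subring_free (B : Subring R) [Module.Free ℤ R] [Module.Finite ℤ R] : Module.Free ℤ B :=
  Module.Free.of_equiv (subringLinEquiv B)

theorem subring_nzsd (B : Subring R) [Module.Free ℤ R] : NoZeroSMulDivisors ℤ B := by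
  constructor
  intro c x h
  have : c • (x : R) = 0 := congrArg Subtype.val h
  rcases smul_eq_zero.mp this with h1 | h2
  · exact Or.inl h1
  · exact Or.inr (Subtype.ext h2)

theorem IsGpRg.finiteH {B : Subring R} {H : Subgroup Rˣ} (hBH : IsGpRg B H)
    [Module.Finite ℤ R] : Finite H := by
  haveI : Module.Finite B R := Module.Finite.of_restrictScalars_finite ℤ B R
  exact Module.Finite.finite_basis hBH.basis

theorem IsGpRg.card_mul_finrank {B : Subring R} {H : Subgroup Rˣ} (hBH : IsGpRg B H)
    [Module.Free ℤ R] [Module.Finite ℤ R] :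
    Nat.card H * Module.finrank ℤ B = Module.finrank ℤ R := by
  haveI := hBH.finiteH
  haveI : Fintype H := Fintype.ofFinite _
  haveI := subring_finite B
  haveI := subring_free B
  have e : R ≃ₗ[ℤ] (H →₀ B) := (hBH.basis.repr : R ≃ₗ[B] (H →₀ B)).restrictScalars ℤ
  rw [e.finrank_eq, Module.finrank_finsupp, Nat.card_eq_fintype_card]

end Rank
theorem stark_of_maximal {R : Type u} [CommRing R] [Nontrivial R]
    (A : Subring R) (G : Subgroup Rˣ) (hAG : IsGpRg A G)
    (hmax : ∀ (B : Subring R) (H : Subgroup Rˣ), IsGpRg B H → G ≤ H → B ≤ A → B = A ∧ H = G) :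
    IsStark A := by
  intro A' _ G' _ hntG'
  constructor
  intro ψ
  set j : MonoidAlgebra A' G' →+* R := A.subtype.comp ψ.symm.toRingHom with hjdef
  have hj : Function.Injective j := fun x y h => ψ.symm.injective (Subtype.ext h)
  have hjA : ∀ x, j x ∈ A := fun x => (ψ.symm x).2
  have hntA' : Nontrivial A' := by
    by_contra hsub
    rw [not_nontrivial_iff_subsingleton] at hsub
    have hs : Subsingleton (MonoidAlgebra A' G') := by
      constructor; intro a b; ext g; exact Subsingleton.elim _ _
    have : Subsingleton A := Equiv.subsingleton ψ.toEquiv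
    exact not_subsingleton A this
  set γ : G' →* Rˣ := (Units.map j.toMonoidHom).comp (MonoidAlgebra.of A' G').toHomUnits
    with hγdef
  have hγval : ∀ g' : G', ((γ g' : Rˣ) : R) = j (MonoidAlgebra.single g' 1) := by
    intro g'; simp [hγdef, MonoidAlgebra.of_apply]
  have hγinj : Function.Injective γ := by
    intro x y h
    have hxy : j (MonoidAlgebra.single x 1) = j (MonoidAlgebra.single y 1) := by
      rw [← hγval, ← hγval, h]
    rcases MonoidAlgebra.single_inj.mp (hj hxy) with ⟨hxy, -⟩ | ⟨h10, -⟩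
    · exact hxy
    · exact absurd h10 one_ne_zero
  set β : A' →+* R := j.comp MonoidAlgebra.singleOneRingHom with hβdef
  set B : Subring R := β.range with hBdef
  have hBA : B ≤ A := by rintro _ ⟨a, rfl⟩; exact hjA _
  set δ : G' × G →* Rˣ := (γ.comp (MonoidHom.fst G' G)) * (G.subtype.comp (MonoidHom.snd G' G))
    with hδdef
  have hδval : ∀ p : G' × G, δ p = γ p.1 * ((p.2 : Rˣ)) := fun p => rfl
  set H : Subgroup Rˣ := δ.range with hHdef
  have hGH : G ≤ H := by
    intro g hg
    exact ⟨(1, ⟨g, hg⟩), by rw [hδval]; simp⟩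
  -- injectivity of δ
  have hδinj : Function.Injective δ := by
    intro ⟨g₁, h₁⟩ ⟨g₂, h₂⟩ hpq
    rw [hδval, hδval] at hpq
    have key : γ (g₁ * g₂⁻¹) = ((h₂ * h₁⁻¹ : G) : Rˣ) := by
      rw [map_mul, map_inv, ← div_eq_mul_inv]
      push_cast
      rw [← div_eq_mul_inv, div_eq_div_iff_mul_eq_mul]
      rw [hpq, mul_comm]
    have hu : ((((h₂ * h₁⁻¹ : G) : Rˣ)) : R) ∈ A := by
      rw [← key, hγval]; exact hjA _
    have h12 : h₂ * h₁⁻¹ = 1 := hAG.eq_one_of_val_mem hu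
    have hh : h₁ = h₂ := by
      rw [mul_inv_eq_one] at h12; exact h12.symm
    have hg : g₁ = g₂ := by
      apply hγinj
      apply mul_right_cancel (b := (h₁ : Rˣ))
      rw [hpq, hh]
    exact Prod.ext hg hh
  -- the module structure of A over B
  letI : Algebra B A := (Subring.inclusion hBA).toAlgebra
  haveI : IsScalarTower B A R := by
    constructor
    intro b a r
    show ((Subring.inclusion hBA b * a : A) : R) * r = (b : R) * ((a : R) * r)
    push_cast
    rw [mul_assoc]
    rfl
  -- the ring iso A' ≃+* B
  have hβinj : Function.Injective β := by
    intro x y h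
    have := hj h
    have := MonoidAlgebra.single_inj.mp (show MonoidAlgebra.single (1 : G') x = MonoidAlgebra.single 1 y from this)
    rcases this with ⟨-, h2⟩ | ⟨hx0, hy0⟩
    · exact h2
    · exact hx0.trans hy0.symm
  set eβ : A' ≃+* B := RingEquiv.ofBijective β.rangeRestrict
    ⟨fun x y h => hβinj (congrArg (fun t : β.range => (t : R)) h), β.rangeRestrict_surjective⟩ with heβdef
  have heβval : ∀ a : A', ((eβ a : B) : R) = β a := fun a => rfl
  -- the B-linear equiv A ≃ (G' →₀ B)
  set E₀ : A ≃+ (G' →₀ B) :=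
    ψ.toAddEquiv.trans (MonoidAlgebra.coeffAddEquiv.trans (Finsupp.mapRange.addEquiv eβ.toAddEquiv)) with hE₀def
  have hE₀app : ∀ (a : A) (g' : G'), E₀ a g' = eβ ((ψ a).coeff g') := fun a g' => rfl
  have hE₀smul : ∀ (b : B) (a : A), E₀ (b • a) = b • E₀ a := by
    intro b a
    obtain ⟨a₀, ha₀⟩ : ∃ a₀, eβ a₀ = b := eβ.surjective b
    have hinc : Subring.inclusion hBA b = ψ.symm (MonoidAlgebra.single 1 a₀) := by
      apply Subtype.ext
      show (b : R) = j (MonoidAlgebra.single 1 a₀)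
      rw [← ha₀, heβval]
      rfl
    apply Finsupp.ext
    intro g'
    show eβ ((ψ (Subring.inclusion hBA b * a)).coeff g') = (b • E₀ a) g'
    rw [map_mul, hinc, RingEquiv.apply_symm_apply]
    rw [MonoidAlgebra.single_one_mul_apply]
    rw [map_mul, ha₀]
    rw [Finsupp.smul_apply, smul_eq_mul, hE₀app]
  set E : A ≃ₗ[B] (G' →₀ B) :=
    { E₀ with map_smul' := hE₀smul } with hEdef
  set bA : Module.Basis G' B A := Module.Basis.ofRepr E with hbAdef
  have hbAval : ∀ g' : G', ((bA g' : A) : R) = ((γ g' : Rˣ) : R) := by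
    intro g'
    have h1 : bA g' = E.symm (Finsupp.single g' 1) := by
      rw [hbAdef]; rfl
    have h2 : E.symm (Finsupp.single g' 1) = ψ.symm (MonoidAlgebra.single g' (1 : A')) := by
      classical
      rw [LinearEquiv.symm_apply_eq]
      symm
      show E₀ (ψ.symm (MonoidAlgebra.single g' (1 : A'))) = Finsupp.single g' 1
      apply Finsupp.ext
      intro h'
      rw [hE₀app, RingEquiv.apply_symm_apply]
      show eβ (Finsupp.single g' (1 : A') h') = Finsupp.single g' (1 : B) h'
      rw [Finsupp.single_apply, Finsupp.single_apply]
      split_ifs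
      · exact map_one eβ
      · exact map_zero eβ
    rw [h1, h2, hγval]
    rfl
  set bR : Module.Basis (G' × G) B R := bA.smulTower hAG.basis with hbRdef
  have hbRval : ∀ p : G' × G, bR p = ((δ p : Rˣ) : R) := by
    intro p
    rw [hbRdef, Module.Basis.smulTower_apply]
    show ((bA p.1 : A) : R) * (hAG.basis p.2) = _
    rw [hbAval, hAG.basis_apply, hδval]
    rfl
  set e : (G' × G) ≃ H := Equiv.ofBijective (fun p => ⟨δ p, p, rfl⟩)
    ⟨fun p q hpq => hδinj (congrArg Subtype.val hpq),
     by rintro ⟨x, p, rfl⟩; exact ⟨p, rfl⟩⟩ with hedef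
  have heval : ∀ p : G' × G, ((e p : H) : Rˣ) = δ p := fun p => rfl
  set bH : Module.Basis H B R := bR.reindex e with hbHdef
  have hbHval : ∀ h : H, bH h = (((h : H) : Rˣ) : R) := by
    intro h
    rw [hbHdef, Module.Basis.reindex_apply, hbRval]
    congr 1
    rw [← heval, e.apply_symm_apply]
  have hBH : IsGpRg B H := isGpRg_of_basis bH hbHval
  obtain ⟨hB, hH⟩ := hmax B H hBH hGH hBA
  obtain ⟨g', hg'⟩ := exists_ne (1 : G')
  have hmem : γ g' ∈ H := ⟨(g', 1), by rw [hδval]; simp⟩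
  rw [hH] at hmem
  have h1 : (⟨γ g', hmem⟩ : G) = 1 := hAG.eq_one_of_val_mem (by rw [hγval]; exact hjA _)
  have h2 : γ g' = 1 := congrArg Subtype.val h1
  exact hg' (hγinj (by rw [h2, map_one]))

set_option maxHeartbeats 3200000 in
theorem maximal_of_stark {R : Type u} [CommRing R] [Nontrivial R]
    (A : Subring R) (G : Subgroup Rˣ) (hAG : IsGpRg A G)
    [Module.Free ℤ R] [Module.Finite ℤ R] (hstark : IsStark A)
    (B : Subring R) (H : Subgroup Rˣ) (hBH : IsGpRg B H) (hGH : G ≤ H) (hBA : B ≤ A) :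
    B = A ∧ H = G := by
  classical
  haveI := subring_finite A
  haveI := subring_free A
  haveI := subring_nzsd A
  haveI := subring_finite B
  haveI := subring_free B
  haveI := hAG.finiteH
  haveI := hBH.finiteH
  -- the augmentation map f : R →+* A
  set aug : MonoidAlgebra A G →+* A :=
    MonoidAlgebra.liftNCRingHom (RingHom.id A) 1 (fun _ _ => Commute.all _ _) with haugdef
  have haug : ∀ (g : G) (a : A), aug (MonoidAlgebra.single g a) = a := by
    intro g a
    have h0 : aug (MonoidAlgebra.single g a) = (RingHom.id A) a * (1 : G →* A) g :=
      MonoidAlgebra.liftNC_single _ _ _ _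
    rw [h0]
    simp
  set eA : MonoidAlgebra A G ≃+* R := RingEquiv.ofBijective (gpRgHom A G) hAG with heAdef
  set f : R →+* A := aug.comp eA.symm.toRingHom with hfdef
  have hfa : ∀ a : A, f (a : R) = a := by
    intro a
    have h1 : eA (MonoidAlgebra.single (1 : G) a) = (a : R) := by
      show gpRgHom A G _ = _
      rw [gpRgHom_single]; simp
    have : eA.symm (a : R) = MonoidAlgebra.single (1 : G) a := by
      rw [← h1, RingEquiv.symm_apply_apply]
    show aug (eA.symm (a : R)) = a
    rw [this, haug]
  have hfg : ∀ g : G, f ((g : Rˣ) : R) = 1 := by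
    intro g
    have h1 : eA (MonoidAlgebra.single g (1 : A)) = ((g : Rˣ) : R) := by
      show gpRgHom A G _ = _
      rw [gpRgHom_single]; simp
    have : eA.symm ((g : Rˣ) : R) = MonoidAlgebra.single g (1 : A) := by
      rw [← h1, RingEquiv.symm_apply_apply]
    show aug (eA.symm _) = 1
    rw [this, haug]
  -- the map φ : H →* Aˣ and its range K
  set φ : H →* (A : Type u)ˣ := (Units.map f.toMonoidHom).comp H.subtype with hφdef
  have hφval : ∀ h : H, ((φ h : (A : Type u)ˣ) : A) = f ((h : Rˣ) : R) := fun h => rfl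
  set K : Subgroup (A : Type u)ˣ := φ.range with hKdef
  haveI : Finite K := Finite.of_surjective _ φ.rangeRestrict_surjective
  haveI : Fintype K := Fintype.ofFinite _
  -- G sits inside the kernel of φ
  have hGker : ∀ h : H, ((h : Rˣ) ∈ G) → φ h = 1 := by
    intro h hh
    apply Units.ext
    rw [hφval]
    exact hfg ⟨(h : Rˣ), hh⟩
  -- cardinality bookkeeping
  have hHcard : Nat.card H = Nat.card K * Nat.card φ.ker := by
    rw [Subgroup.card_eq_card_quotient_mul_card_subgroup φ.ker]
    congr 1
    exact Nat.card_congr (QuotientGroup.quotientKerEquivRange φ).toEquiv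
  have hGle : Nat.card G ≤ Nat.card φ.ker := by
    apply Nat.card_le_card_of_injective (fun g : G => (⟨⟨(g : Rˣ), hGH g.2⟩,
      MonoidHom.mem_ker.mpr (hGker _ g.2)⟩ : φ.ker))
    intro x y hxy
    apply Subtype.ext
    have := congrArg (fun t : φ.ker => ((t : H) : Rˣ)) hxy
    exact this
  -- the subring B' of A and the group ring map T
  set B' : Subring (A : Type u) := B.comap A.subtype with hB'def
  set T : MonoidAlgebra B' K →+* (A : Type u) := gpRgHom B' K with hTdef
  -- surjectivity of T
  have hTsurj : Function.Surjective T := by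
    have key : ∀ x : MonoidAlgebra B H, f (gpRgHom B H x) ∈ T.range := by
      intro x
      induction x using MonoidAlgebra.induction_linear with
      | zero => rw [map_zero, map_zero]; exact Subring.zero_mem _
      | add p q hp hq => rw [map_add, map_add]; exact Subring.add_mem _ hp hq
      | single h b =>
          rw [gpRgHom_single, map_mul]
          have hb : f ((b : R)) = ⟨(b : R), hBA b.2⟩ := hfa ⟨(b : R), hBA b.2⟩
          have hk : f ((( h : Rˣ) : R)) = ((φ h : (A : Type u)ˣ) : A) := rfl
          rw [hb, hk]
          refine ⟨MonoidAlgebra.single (⟨φ h, ⟨h, rfl⟩⟩ : K)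
            (⟨⟨(b : R), hBA b.2⟩, b.2⟩ : B'), ?_⟩
          rw [hTdef, gpRgHom_single]
    intro a
    obtain ⟨x, hx⟩ := hBH.2 (a : R)
    have := key x
    rw [hx, hfa] at this
    exact this
  -- instances for B'
  haveI : Module.Finite ℤ B' := subring_finite B'
  haveI : Module.Free ℤ B' := subring_free B'
  -- finrank of B' equals finrank of B
  have hB'B : Module.finrank ℤ B' = Module.finrank ℤ B := by
    refine LinearEquiv.finrank_eq (AddEquiv.toIntLinearEquiv ?_)
    exact
      { toFun := fun x => ⟨(x.1 : R), x.2⟩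
        invFun := fun x => ⟨⟨(x : R), hBA x.2⟩, x.2⟩
        left_inv := fun _ => rfl
        right_inv := fun _ => rfl
        map_add' := fun _ _ => rfl }
  -- rank bookkeeping
  set n := Module.finrank ℤ R with hndef
  set rA := Module.finrank ℤ (A : Type u) with hrAdef
  set rB := Module.finrank ℤ (B : Type u) with hrBdef
  have h1 : Nat.card G * rA = n := hAG.card_mul_finrank
  have h2 : Nat.card H * rB = n := hBH.card_mul_finrank
  have hrApos : 0 < rA := Module.finrank_pos
  have hGpos : 0 < Nat.card G := Nat.card_pos
  -- finrank of the source of T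
  have hsrc : Module.finrank ℤ (MonoidAlgebra B' K) = Nat.card K * rB := by
    have : Module.finrank ℤ (MonoidAlgebra B' K) = Module.finrank ℤ ((K : Type u) →₀ B') :=
      (MonoidAlgebra.coeffLinearEquiv ℤ).finrank_eq
    rw [this, Module.finrank_finsupp, hB'B, Nat.card_eq_fintype_card]
  -- T as a ℤ-linear map
  set Tℤ : ((K : Type u) →₀ B') →ₗ[ℤ] (A : Type u) :=
    AddMonoidHom.toIntLinearMap
      { toFun := fun x => T (MonoidAlgebra.ofCoeff x)
        map_zero' := map_zero T
        map_add' := fun x y => map_add T (MonoidAlgebra.ofCoeff x) (MonoidAlgebra.ofCoeff y) } with hTZdef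
  have hTZsurj : Function.Surjective Tℤ := by
    intro a; obtain ⟨x, hx⟩ := hTsurj a; exact ⟨x.coeff, hx⟩
  -- rank inequality from surjectivity
  have hle1 : rA ≤ Nat.card K * rB := by
    have hr := LinearMap.rank_le_of_surjective Tℤ hTZsurj
    have := Cardinal.toNat_le_toNat hr (Module.rank_lt_aleph0 ℤ _)
    rw [show (Module.rank ℤ ((K : Type u) →₀ B')).toNat
        = Module.finrank ℤ ((K : Type u) →₀ B') from rfl] at this
    rw [show Module.finrank ℤ ((K : Type u) →₀ B')
        = Module.finrank ℤ (MonoidAlgebra B' K) from (MonoidAlgebra.coeffLinearEquiv ℤ).finrank_eq.symm, hsrc] at this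
    exact this
  -- rank inequality from the kernel
  have hle2 : Nat.card K * rB ≤ rA := by
    have step : (Nat.card K * rB) * Nat.card G ≤ rA * Nat.card G := by
      calc (Nat.card K * rB) * Nat.card G
          = (Nat.card K * Nat.card G) * rB := by ring
        _ ≤ (Nat.card K * Nat.card φ.ker) * rB := by
            exact Nat.mul_le_mul_right _ (Nat.mul_le_mul_left _ hGle)
        _ = Nat.card H * rB := by rw [← hHcard]
        _ = n := h2
        _ = Nat.card G * rA := h1.symm
        _ = rA * Nat.card G := by ring
    exact Nat.le_of_mul_le_mul_right step hGpos
  have hrkeq : Module.finrank ℤ ((K : Type u) →₀ B') = rA := by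
    rw [show Module.finrank ℤ ((K : Type u) →₀ B')
        = Module.finrank ℤ (MonoidAlgebra B' K) from (MonoidAlgebra.coeffLinearEquiv ℤ).finrank_eq.symm, hsrc]
    exact le_antisymm hle2 hle1
  -- injectivity of T
  have hTinj : Function.Injective T := by
    haveI : Module.Free ℤ ((K : Type u) →₀ B') := inferInstance
    haveI : Module.Finite ℤ ((K : Type u) →₀ B') := inferInstance
    set bM := Module.Free.chooseBasis ℤ ((K : Type u) →₀ B') with hbMdef
    set bA := Module.Free.chooseBasis ℤ (A : Type u) with hbAdef
    have hcard : Fintype.card (Module.Free.ChooseBasisIndex ℤ (A : Type u))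
        = Fintype.card (Module.Free.ChooseBasisIndex ℤ ((K : Type u) →₀ B')) := by
      rw [← Module.finrank_eq_card_chooseBasisIndex, ← Module.finrank_eq_card_chooseBasisIndex,
        hrkeq]
    set q : (A : Type u) ≃ₗ[ℤ] ((K : Type u) →₀ B') :=
      bA.equiv bM (Fintype.equivOfCardEq hcard) with hqdef
    have hendo : Function.Surjective (q.toLinearMap ∘ₗ Tℤ) :=
      q.surjective.comp hTZsurj
    have hinj : Function.Injective (q.toLinearMap ∘ₗ Tℤ) :=
      OrzechProperty.injective_of_surjective_endomorphism _ hendo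
    have hTZinj : Function.Injective Tℤ := by
      intro x y h
      apply hinj
      rw [LinearMap.comp_apply, LinearMap.comp_apply, h]
    exact fun x y h => MonoidAlgebra.coeff_injective (hTZinj (a₁ := x.coeff) (a₂ := y.coeff) h)
  have hB'K : IsGpRg B' K := ⟨hTinj, hTsurj⟩
  have hKbot : K = ⊥ := by
    by_contra hne
    haveI : Nontrivial K := (Subgroup.nontrivial_iff_ne_bot K).mpr hne
    exact (hstark B' inferInstance K inferInstance inferInstance).false
      ((RingEquiv.ofBijective T hB'K).symm)
  have hBeqA : B = A := by
    apply le_antisymm hBA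
    intro a ha
    obtain ⟨x, hx⟩ := hTsurj ⟨a, ha⟩
    have hmem : ∀ y : MonoidAlgebra B' K, T y ∈ B' := by
      intro y
      induction y using MonoidAlgebra.induction_linear with
      | zero => rw [map_zero]; exact Subring.zero_mem _
      | add p q hp hq => rw [map_add]; exact Subring.add_mem _ hp hq
      | single k b =>
          rw [hTdef, gpRgHom_single]
          have hall : ∀ x : ((A : Type u))ˣ, x ∈ K → x = 1 := by
            rw [hKbot]
            intro x hx
            exact Subgroup.mem_bot.mp hx
          have hk1 : ((k : K) : ((A : Type u))ˣ) = 1 := hall _ k.2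
          rw [hk1]
          simpa using b.2
    have := hmem x
    rw [hx] at this
    exact this
  have hcardK : Nat.card K = 1 := by rw [hKbot]; exact Subgroup.card_bot
  have hrAB : rA = rB := by
    have heq : Nat.card K * rB = rA := le_antisymm hle2 hle1
    rw [← heq, hcardK, one_mul]
  have hHGcard : Nat.card H = Nat.card G := by
    have : Nat.card G * rA = Nat.card H * rA := by
      rw [h1, ← h2, hrAB]
    exact (Nat.eq_of_mul_eq_mul_right hrApos this).symm
  have hHeqG : H = G := (Subgroup.eq_of_le_of_card_ge hGH (le_of_eq hHGcard)).symm
  exact ⟨hBeqA, hHeqG⟩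

/-- Let `R` be a non-zero commutative ring and `(A,G) ∈ GpRg(R)`.
If `(A,G)` is maximal in `GpRg(R)`, then `A` is stark; conversely, if `R` is a connected
order and `A` is stark, then `(A,G)` is maximal in `GpRg(R)`. -/
theorem maximal_iff_stark
    {R : Type u} [CommRing R] [Nontrivial R]
    (A : Subring R) (G : Subgroup Rˣ) (hAG : IsGpRg A G) :
    ((∀ (B : Subring R) (H : Subgroup Rˣ), IsGpRg B H → G ≤ H → B ≤ A → B = A ∧ H = G) →
      IsStark A) ∧
    (IsConnectedRing R → Module.Free ℤ R → Module.Finite ℤ R → IsStark A →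
      ∀ (B : Subring R) (H : Subgroup Rˣ), IsGpRg B H → G ≤ H → B ≤ A → B = A ∧ H = G) := by
  constructor
  · intro hmax
    exact stark_of_maximal A G hAG hmax
  · intro _hconn hfree hfin hstark B H hBH hGH hBA
    haveI := hfree
    haveI := hfin
    exact maximal_of_stark A G hAG hstark B H hBH hGH hBA
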